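/- Let x = (a,b,c) and y = (a',b',c') be vectors in ℝ³, and consider the 5×5 real matrices: u, whose only nonzero entries are u₄₅ = -1 and u₅₄ = 1; v, whose only nonzero entries are given in block form by v = [[0, -A],[Aᵀ, 0]] where A is the 3×2 matrix with columns x and y (that is, vᵢ₄ = -xᵢ, vᵢ₅ = -yᵢ, v₄ᵢ = xᵢ, v₅ᵢ = yᵢ for i = 1,2,3); and w := ⁅u,v⁆ = u·v − v·u. If ⁅v,w⁆ lies in the real linear span of {u, v, w}, then x and y are linearly dependent over ℝ. -/
import Mathlib


open Matrix

/-- Let `x = (a,b,c)` and `y = (a',b',c')` in `ℝ³`, and consider the `5×5` real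
matrices `u` (whose only nonzero entries are `u₄₅ = -1`, `u₅₄ = 1`),
`v = [[0, -A],[Aᵀ, 0]]` in block form, where `A` is the `3×2` matrix with columns `x`
and `y`, and `w = ⁅u,v⁆`.  If `⁅v,w⁆` lies in the real span of `{u,v,w}` then `x` and
`y` are linearly dependent over `ℝ`. -/
theorem so5_columns_linearly_dependent
    (x y : Fin 3 → ℝ) (u v w : Matrix (Fin 5) (Fin 5) ℝ)
    (hu : u = !![0, 0, 0, 0, 0;
                 0, 0, 0, 0, 0;
                 0, 0, 0, 0, 0;
                 0, 0, 0, 0, -1;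
                 0, 0, 0, 1, 0])
    (hv : v = !![0, 0, 0, -x 0, -y 0;
                 0, 0, 0, -x 1, -y 1;
                 0, 0, 0, -x 2, -y 2;
                 x 0, x 1, x 2, 0, 0;
                 y 0, y 1, y 2, 0, 0])
    (hw : w = ⁅u, v⁆)
    (h : ⁅v, w⁆ ∈ Submodule.span ℝ ({u, v, w} : Set (Matrix (Fin 5) (Fin 5) ℝ))) :
    ¬ LinearIndependent ℝ ![x, y] := by
  rw [Submodule.mem_span_insert] at h
  obtain ⟨a, z, hz, heq⟩ := h
  rw [Submodule.mem_span_insert] at hz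
  obtain ⟨b, z', hz', heq'⟩ := hz
  rw [Submodule.mem_span_singleton] at hz'
  obtain ⟨c, hc⟩ := hz'
  subst hc heq' hw hu hv
  have h01 := congrFun (congrFun heq 0) 1
  have h02 := congrFun (congrFun heq 0) 2
  have h12 := congrFun (congrFun heq 1) 2
  simp [Ring.lie_def, Matrix.mul_apply, Fin.sum_univ_succ, Matrix.sub_apply,
    Matrix.add_apply, Matrix.smul_apply] at h01 h02 h12
  -- entry equations: 2(x i * y j - x j * y i) = 0
  intro hli
  rw [LinearIndependent.pair_iff] at hli
  by_cases hx : x = 0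
  · have := hli 1 0 (by simp [hx])
    exact one_ne_zero this.1
  · obtain ⟨i, hi⟩ : ∃ i, x i ≠ 0 := by
      by_contra hc
      push_neg at hc
      exact hx (funext hc)
    have key : ∀ j, x i * y j = x j * y i := by
      intro j
      fin_cases i <;> fin_cases j <;> simp at hi ⊢ <;> nlinarith [h01, h02, h12]
    have hcomb : (y i) • x + (-(x i)) • y = 0 := by
      funext j
      have := key j
      simp [Pi.add_apply, Pi.smul_apply]
      nlinarith [key j]
    exact hi (neg_eq_zero.mp (hli (y i) (-(x i)) hcomb).2)
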